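/- If 2 ≤ q ≤ 3 then for all real t ≥ 0, (1+t)^q ≤ 1 + q·t + (1/2)·q·(q-1)·t² + (q-2)·t³. -/

import Mathlib

open Set

private lemma nonneg_of_hasDerivAt_aux {f f' : ℝ → ℝ}
    (hd : ∀ x ∈ Set.Ici (0:ℝ), HasDerivAt f (f' x) x)
    (h0 : f 0 = 0) (h' : ∀ x ∈ Set.Ici (0:ℝ), 0 ≤ f' x)
    {t : ℝ} (ht : 0 ≤ t) : 0 ≤ f t := by
  have hmono : MonotoneOn f (Set.Ici 0) := by
    apply monotoneOn_of_deriv_nonneg (convex_Ici 0)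
    · exact fun x hx => (hd x hx).continuousAt.continuousWithinAt
    · intro x hx
      rw [interior_Ici] at hx
      exact (hd x (Set.mem_Ici.mpr (Set.mem_Ioi.mp hx).le)).differentiableAt.differentiableWithinAt
    · intro x hx
      rw [interior_Ici] at hx
      rw [(hd x (Set.mem_Ici.mpr (Set.mem_Ioi.mp hx).le)).deriv]
      exact h' x (Set.mem_Ici.mpr (Set.mem_Ioi.mp hx).le)
  have h2 := hmono Set.self_mem_Ici ht ht
  rw [h0] at h2
  exact h2

private lemma hasDerivAt_one_add_rpow (p x : ℝ) (hx : 0 ≤ x) :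
    HasDerivAt (fun t : ℝ => (1 + t) ^ p) (p * (1 + x) ^ (p - 1)) x := by
  have h1 : HasDerivAt (fun t : ℝ => 1 + t) 1 x := by
    simpa using (hasDerivAt_id x).const_add 1
  have h2 := (Real.hasDerivAt_rpow_const (x := 1 + x) (p := p)
    (Or.inl (by linarith))).comp x h1
  simpa [Function.comp_def] using h2

theorem rpow_le_taylor_cubic_remainder (q t : ℝ) (hq2 : 2 ≤ q) (hq3 : q ≤ 3)
    (ht : 0 ≤ t) :
    (1 + t) ^ q ≤ 1 + q * t + (1 / 2) * q * (q - 1) * t ^ 2 + (q - 2) * t ^ 3 := by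
  set f1 : ℝ → ℝ := fun x => q + q * (q - 1) * x + 3 * (q - 2) * x ^ 2 - q * (1 + x) ^ (q - 1)
    with hf1
  set f2 : ℝ → ℝ := fun x => q * (q - 1) + 6 * (q - 2) * x - q * (q - 1) * (1 + x) ^ (q - 2)
    with hf2
  -- f1 ≥ 0 on Ici 0
  have hf1nonneg : ∀ x ∈ Set.Ici (0:ℝ), 0 ≤ f1 x := by
    apply nonneg_of_hasDerivAt_aux (f' := f2)
    · intro x hx
      have hpow := hasDerivAt_one_add_rpow (q - 1) x hx
      have h := (((hasDerivAt_const x q).add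
          (((hasDerivAt_id x).const_mul (q * (q - 1))))).add
          (((hasDerivAt_pow 2 x).const_mul (3 * (q - 2))))).sub (hpow.const_mul q)
      rw [show q - 1 - 1 = q - 2 by ring] at h
      refine h.congr_deriv ?_
      simp only [hf2]; norm_num; ring
    · simp [hf1, Real.one_rpow]
    · intro x hx
      simp only [Set.mem_Ici] at hx
      have hbern : (1 + x) ^ (q - 2) ≤ 1 + (q - 2) * x :=
        rpow_one_add_le_one_add_mul_self (by linarith) (by linarith) (by linarith)
      have hmul : q * (q - 1) * (1 + x) ^ (q - 2) ≤ q * (q - 1) * (1 + (q - 2) * x) := by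
        apply mul_le_mul_of_nonneg_left hbern (by nlinarith)
      have h6 : 0 ≤ (q - 2) * x * (6 - q * (q - 1)) := by
        apply mul_nonneg (mul_nonneg (by linarith) hx)
        nlinarith
      simp only [hf2]
      nlinarith [hmul, h6]
  -- main function ≥ 0
  have hmain : 0 ≤ 1 + q * t + (1 / 2) * q * (q - 1) * t ^ 2 + (q - 2) * t ^ 3
      - (1 + t) ^ q := by
    apply nonneg_of_hasDerivAt_aux (f' := f1) (t := t) _ _ _ ht
    · intro x hx
      have hx0 : (0:ℝ) ≤ x := hx
      have hpow := hasDerivAt_one_add_rpow q x hx0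
      have h := ((((hasDerivAt_const x 1).add ((hasDerivAt_id x).const_mul q)).add
          ((hasDerivAt_pow 2 x).const_mul ((1 / 2) * q * (q - 1)))).add
          ((hasDerivAt_pow 3 x).const_mul (q - 2))).sub hpow
      refine h.congr_deriv ?_
      simp only [hf1]; norm_num; ring
    · simp [Real.one_rpow]
    · exact hf1nonneg
  linarith
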